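/- Let G be a finite cyclic group whose order is not a prime power. Then for every x ∈ G \ {1} that does not generate G, there exists y ∈ G such that x and y are not joined in the power graph, i.e., x is not a power of y and y is not a power of x. -/
import Mathlib

theorem aux {n d : ℕ} (hdn : d ∣ n) (hd1 : 1 < d) (hdlt : d < n)
    (h : ¬ ∃ p k : ℕ, p.Prime ∧ n = p ^ k) :
    ∃ m : ℕ, m ∣ n ∧ ¬ m ∣ d ∧ ¬ d ∣ m := by
  have hn0 : n ≠ 0 := by omega
  have hd0 : d ≠ 0 := by omega
  have hmul := Nat.div_mul_cancel hdn
  have hnd0 : n / d ≠ 0 := by intro hh; rw [hh, zero_mul] at hmul; omega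
  obtain ⟨q, hq, hqdvd⟩ := Nat.exists_prime_and_dvd (n := n / d) (by
    intro hh; rw [hh, one_mul] at hmul; omega)
  have hqn : q ∣ n := hqdvd.trans (Nat.div_dvd_of_dvd hdn)
  have hval : d.factorization q < n.factorization q := by
    have h2 : d.factorization q + (n/d).factorization q = n.factorization q := by
      rw [← Finsupp.add_apply, ← Nat.factorization_mul hd0 hnd0, Nat.mul_div_cancel' hdn]
    have h3 := Nat.Prime.factorization_pos_of_dvd hq hnd0 hqdvd
    omega
  by_cases hdq : ∃ b, d = q ^ b
  · obtain ⟨b, rfl⟩ := hdq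
    have hb1 : 1 ≤ b := by
      by_contra hb; push_neg at hb; interval_cases b <;> simp_all
    have : ∃ p, p.Prime ∧ p ∣ n ∧ p ≠ q := by
      by_contra hc
      push_neg at hc
      refine h ⟨q, n.primeFactorsList.length, hq, Nat.eq_prime_pow_of_unique_prime_dvd hn0 ?_⟩
      intro r hr hrn
      by_contra hne
      exact hne (hc r hr hrn)
    obtain ⟨p, hp, hpn, hpq⟩ := this
    refine ⟨p, hpn, ?_, ?_⟩
    · intro hdvd
      obtain ⟨c, hc, rfl⟩ := (Nat.dvd_prime_pow hq).1 hdvd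
      rcases Nat.eq_zero_or_pos c with rfl | hc0
      · exact absurd hp (by norm_num)
      · exact hpq (((Nat.prime_dvd_prime_iff_eq hq hp).1 (dvd_pow_self q (by omega))).symm)
    · intro hdvd
      rcases (Nat.dvd_prime hp).1 hdvd with h1 | h1
      · omega
      · exact hpq (((Nat.prime_dvd_prime_iff_eq hq hp).1
          (h1 ▸ dvd_pow_self q (by omega))).symm)
  · refine ⟨q ^ (d.factorization q + 1), ?_, ?_, ?_⟩
    · exact (Nat.Prime.pow_dvd_iff_le_factorization hq hn0).2 hval
    · intro hdvd
      have := (Nat.Prime.pow_dvd_iff_le_factorization hq hd0).1 hdvd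
      omega
    · intro hdvd
      obtain ⟨c, hc, rfl⟩ := (Nat.dvd_prime_pow hq).1 hdvd
      exact hdq ⟨c, rfl⟩

theorem exists_not_joined_of_not_generator {G : Type*} [Group G] [Finite G]
    [IsCyclic G] (h : ¬ ∃ p n : ℕ, p.Prime ∧ Nat.card G = p ^ n)
    (x : G) (hx1 : x ≠ 1) (hxgen : Subgroup.zpowers x ≠ ⊤) :
    ∃ y : G, ¬ (∃ m : ℕ, 0 < m ∧ x = y ^ m) ∧ ¬ (∃ m : ℕ, 0 < m ∧ y = x ^ m) := by
  set n := Nat.card G with hn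
  set d := orderOf x with hd
  have hdn : d ∣ n := orderOf_dvd_natCard x
  have hd1 : 1 < d := by
    have hpos : 0 < d := (isOfFinOrder_of_finite x).orderOf_pos
    rcases Nat.lt_or_ge d 2 with h2 | h2
    · interval_cases d
      · exact absurd (orderOf_eq_one_iff.1 hd.symm) hx1
    · exact h2
  have hdlt : d < n := by
    rcases lt_or_eq_of_le (Nat.le_of_dvd Nat.card_pos hdn) with h2 | h2
    · exact h2
    · exact absurd (Subgroup.eq_top_of_card_eq _ (by rw [Nat.card_zpowers, ← hd, h2])) hxgen
  obtain ⟨m, hmn, hmd, hdm⟩ := aux hdn hd1 hdlt h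
  obtain ⟨g, hg⟩ := IsCyclic.exists_ofOrder_eq_natCard (α := G)
  have hm0 : m ≠ 0 := by
    rintro rfl
    rw [Nat.zero_dvd] at hmn
    exact absurd hmn Nat.card_pos.ne'
  have hy : orderOf (g ^ (n / m)) = m := by
    rw [orderOf_pow, hg, ← hn, Nat.gcd_eq_right (Nat.div_dvd_of_dvd hmn),
      Nat.div_div_self hmn (by omega)]
  refine ⟨g ^ (n / m), ?_, ?_⟩
  · rintro ⟨k, hk, hxy⟩
    have hmem : x ∈ Subgroup.zpowers (g ^ (n / m)) := by
      rw [hxy]; exact Subgroup.npow_mem_zpowers _ k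
    have := orderOf_dvd_of_mem_zpowers hmem
    rw [hy, ← hd] at this
    exact hdm this
  · rintro ⟨k, hk, hyx⟩
    have hmem : g ^ (n / m) ∈ Subgroup.zpowers x := by
      rw [hyx]; exact Subgroup.npow_mem_zpowers _ k
    have := orderOf_dvd_of_mem_zpowers hmem
    rw [hy, ← hd] at this
    exact hmd this
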